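/- For every even positive integer n, the denominator of the Bernoulli number B_n (in lowest terms) equals the product of all primes p with (p-1) | n. -/

import Mathlib

open Finset

section CvS

/-- `x` is `p`-integral. -/
def PIcvs (p : ℕ) (x : ℚ) : Prop := ∃ a b : ℤ, ¬ (p:ℤ) ∣ b ∧ x * b = a

namespace PIcvs

variable {p : ℕ}

lemma intCast (hp : p.Prime) (n : ℤ) : PIcvs p (n : ℚ) :=
  ⟨n, 1, by simpa [Int.isUnit_iff] using (Nat.prime_iff_prime_int.mp hp).not_dvd_one, by simp⟩

lemma zero (hp : p.Prime) : PIcvs p 0 :=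
  ⟨0, 1, by simpa [Int.isUnit_iff] using (Nat.prime_iff_prime_int.mp hp).not_dvd_one, by simp⟩

lemma mul (hp : p.Prime) {x y : ℚ} (hx : PIcvs p x) (hy : PIcvs p y) : PIcvs p (x * y) := by
  obtain ⟨a₁, b₁, hb₁, h₁⟩ := hx
  obtain ⟨a₂, b₂, hb₂, h₂⟩ := hy
  refine ⟨a₁ * a₂, b₁ * b₂, fun h => ?_, ?_⟩
  · rcases ((Nat.prime_iff_prime_int.mp hp).dvd_mul).1 h with h | h <;> [exact hb₁ h; exact hb₂ h]
  · push_cast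
    rw [show x * y * (b₁ * b₂) = (x * b₁) * (y * b₂) by ring, h₁, h₂]

lemma add (hp : p.Prime) {x y : ℚ} (hx : PIcvs p x) (hy : PIcvs p y) : PIcvs p (x + y) := by
  obtain ⟨a₁, b₁, hb₁, h₁⟩ := hx
  obtain ⟨a₂, b₂, hb₂, h₂⟩ := hy
  refine ⟨a₁ * b₂ + a₂ * b₁, b₁ * b₂, fun h => ?_, ?_⟩
  · rcases ((Nat.prime_iff_prime_int.mp hp).dvd_mul).1 h with h | h <;> [exact hb₁ h; exact hb₂ h]
  · push_cast
    rw [show (x + y) * (b₁ * b₂) = (x * b₁) * b₂ + (y * b₂) * b₁ by ring, h₁, h₂]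

lemma sum (hp : p.Prime) {s : Finset ℕ} {f : ℕ → ℚ} (h : ∀ i ∈ s, PIcvs p (f i)) :
    PIcvs p (∑ i ∈ s, f i) :=
  Finset.sum_induction f (PIcvs p) (fun _ _ => add hp) (zero hp) h

end PIcvs

lemma lt_two_pow_pred : ∀ {j : ℕ}, 3 ≤ j → j < 2 ^ (j - 1) := by
  have H : ∀ k : ℕ, 2 ≤ k → k + 1 < 2 ^ k := by
    intro k hk
    induction k with
    | zero => omega
    | succ k ih =>
        rcases Nat.lt_or_ge k 2 with h | h
        · interval_cases k <;> [omega; norm_num]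
        · have := ih h
          have h2 : 1 ≤ 2 ^ k := Nat.one_le_two_pow
          calc k + 1 + 1 < 2 ^ k + 2 ^ k := by omega
          _ = 2 ^ (k + 1) := by ring
  intro j hj
  have := H (j - 1) (by omega)
  omega

lemma padic_le {p j : ℕ} (hp : p.Prime) (hj : 3 ≤ j) : j.factorization p ≤ j - 2 := by
  by_contra h
  push_neg at h
  have h1 : j - 1 ≤ j.factorization p := by omega
  have h2 : p ^ (j.factorization p) ∣ j := Nat.ordProj_dvd j p
  have h3 : p ^ (j - 1) ≤ j :=
    le_trans (Nat.pow_le_pow_right hp.pos h1) (Nat.le_of_dvd (by omega) h2)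
  have h4 : 2 ^ (j - 1) ≤ p ^ (j - 1) := Nat.pow_le_pow_left hp.two_le _
  have := lt_two_pow_pred hj
  omega

lemma PIcvs.pow_div {p j : ℕ} (hp : p.Prime) (hj : 3 ≤ j) :
    PIcvs p ((p:ℚ) ^ (j - 2) / (j : ℚ)) := by
  set v := j.factorization p with hv
  have hvle : v ≤ j - 2 := padic_le hp hj
  obtain ⟨b, hb⟩ : p ^ v ∣ j := Nat.ordProj_dvd j p
  have hj0 : j ≠ 0 := by omega
  have hpb : ¬ p ∣ b := by
    rintro ⟨c, rfl⟩
    have : p ^ (v + 1) ∣ j := ⟨c, by rw [hb]; ring⟩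
    have := (Nat.Prime.pow_dvd_iff_le_factorization hp hj0).mp this
    omega
  refine ⟨(p:ℤ) ^ (j - 2 - v), (b:ℤ), fun h => hpb (by exact_mod_cast h), ?_⟩
  have hp0 : (p:ℚ) ≠ 0 := by exact_mod_cast hp.pos.ne'
  have hb0 : (b:ℚ) ≠ 0 := by
    have : b ≠ 0 := by rintro rfl; simp at hb; omega
    exact_mod_cast this
  have hsplit : (p:ℚ) ^ (j - 2) = (p:ℚ) ^ (j - 2 - v) * (p:ℚ) ^ v := by
    rw [← pow_add]; congr 1; omega
  have hjc : (j:ℚ) = (p:ℚ) ^ v * (b:ℚ) := by exact_mod_cast congrArg (Nat.cast : ℕ → ℚ) hb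
  rw [hsplit, hjc]
  push_cast
  field_simp

lemma sum_pow_mod (p m : ℕ) (hp : p.Prime) (hm : 0 < m) :
    (p:ℤ) ∣ (∑ k ∈ range p, (k:ℤ) ^ m) - (if (p - 1) ∣ m then -1 else 0) := by
  haveI := Fact.mk hp
  rw [← ZMod.intCast_zmod_eq_zero_iff_dvd]
  push_cast
  rw [sub_eq_zero]
  have h1 : ∑ k ∈ range p, (k : ZMod p) ^ m = ∑ x : ZMod p, x ^ m := by
    refine Finset.sum_nbij' (fun k => (k : ZMod p)) (fun x => x.val) ?_ ?_ ?_ ?_ ?_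
    · intro k _; exact mem_univ _
    · intro x _; exact mem_range.mpr (ZMod.val_lt x)
    · intro k hk; exact ZMod.val_cast_of_lt (mem_range.mp hk)
    · intro x _; exact ZMod.natCast_zmod_val x
    · intro k _; rfl
  have h2 : ∑ x : ZMod p, x ^ m = ∑ x : (ZMod p)ˣ, (x : ZMod p) ^ m := by
    classical
    let φ : (ZMod p)ˣ ↪ ZMod p := ⟨fun x => x, Units.val_injective⟩
    have huniv : univ.map φ = univ \ {0} := by
      ext x
      simpa only [mem_map, mem_univ, Function.Embedding.coeFn_mk, true_and, mem_sdiff,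
        mem_singleton, φ] using (show (∃ a : (ZMod p)ˣ, (a : ZMod p) = x) ↔ ¬ x = 0 from isUnit_iff_ne_zero)
    calc
      ∑ x : ZMod p, x ^ m = ∑ x ∈ univ \ {(0 : ZMod p)}, x ^ m := by
        rw [← sum_sdiff ({0} : Finset (ZMod p)).subset_univ, sum_singleton,
          zero_pow hm.ne', add_zero]
      _ = ∑ x : (ZMod p)ˣ, (x : ZMod p) ^ m := by
        rw [← huniv, univ.sum_map φ]; rfl
  have h3 := FiniteField.sum_pow_units (ZMod p) m
  rw [ZMod.card] at h3
  rw [h1, h2, h3]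

lemma PIcvs.p_half {p : ℕ} (hp : p.Prime) : PIcvs p ((p:ℚ) * (-1/2)) := by
  rcases eq_or_ne p 2 with rfl | hp2
  · exact ⟨-1, 1, by simpa [Int.isUnit_iff] using (Nat.prime_iff_prime_int.mp hp).not_dvd_one,
      by norm_num⟩
  · refine ⟨-(p:ℤ), 2, fun h => ?_, by push_cast; ring⟩
    have h2 : p ∣ 2 := by exact_mod_cast h
    exact hp2 ((Nat.prime_dvd_prime_iff_eq hp Nat.prime_two).mp h2)

lemma term_PI {p m i : ℕ} (hp : p.Prime) (him : i < m) (h3 : 3 ≤ m + 1 - i)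
    (hbi : PIcvs p ((p:ℚ) * bernoulli i)) :
    PIcvs p (bernoulli i * ((m+1).choose i : ℚ) * (p:ℚ) ^ (m - i) / ((m:ℚ) + 1)) := by
  have hij : i ≤ m := him.le
  have hchoose : (m+1) * Nat.choose m i = Nat.choose (m+1) i * (m+1-i) := by
    have h1 := Nat.add_one_mul_choose_eq m (m-i)
    have h2 : m - i + 1 = m + 1 - i := by omega
    have h4 : Nat.choose (m+1) (m+1-i) = Nat.choose (m+1) i :=
      Nat.choose_symm (by omega)
    rw [h2, h4, Nat.choose_symm hij] at h1
    exact h1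
  have heq : bernoulli i * ((m+1).choose i : ℚ) * (p:ℚ) ^ (m - i) / ((m:ℚ) + 1)
      = ((Nat.choose m i : ℤ) : ℚ) * ((p:ℚ) * bernoulli i)
        * ((p:ℚ) ^ (m + 1 - i - 2) / ((m+1-i : ℕ) : ℚ)) := by
    have hj0 : ((m+1-i : ℕ) : ℚ) ≠ 0 := Nat.cast_ne_zero.mpr (by omega)
    have hm1 : ((m:ℚ) + 1) ≠ 0 := by positivity
    have hpow : (p:ℚ) ^ (m - i) = (p:ℚ) * (p:ℚ) ^ (m + 1 - i - 2) := by
      rw [← pow_succ']; congr 1; omega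
    have hcc : ((m:ℚ) + 1) * (Nat.choose m i : ℚ)
        = ((m+1).choose i : ℚ) * ((m+1-i : ℕ) : ℚ) := by exact_mod_cast hchoose
    rw [hpow]
    push_cast
    field_simp
    push_cast at hcc
    linear_combination (- bernoulli i * (p:ℚ) * (p:ℚ) ^ (m + 1 - i - 2)) * hcc
  rw [heq]
  exact PIcvs.mul hp (PIcvs.mul hp (PIcvs.intCast hp _) hbi) (PIcvs.pow_div hp h3)

lemma bernoulli_key (p : ℕ) (hp : p.Prime) :
    ∀ m : ℕ, 0 < m → Even m →
      ∃ a b : ℤ, ¬ (p:ℤ) ∣ b ∧ ((p:ℚ) * bernoulli m) * b = a ∧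
        (p:ℤ) ∣ a - (if (p - 1) ∣ m then -1 else 0) * b := by
  intro m
  induction m using Nat.strong_induction_on with
  | _ m ih =>
  intro hm he
  have hm2 : 2 ≤ m := by
    rcases he with ⟨k, hk⟩; omega
  -- p-integrality of p * bernoulli i for i < m
  have hPIb : ∀ i < m, PIcvs p ((p:ℚ) * bernoulli i) := by
    intro i hi
    rcases Nat.even_or_odd i with hei | hoi
    · rcases Nat.eq_zero_or_pos i with rfl | hipos
      · simpa [bernoulli_zero] using PIcvs.intCast hp (p:ℤ)
      · obtain ⟨a, b, hb, heq, _⟩ := ih i hi hipos hei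
        exact ⟨a, b, hb, heq⟩
    · rcases eq_or_ne i 1 with rfl | hi1
      · simpa [bernoulli_one] using PIcvs.p_half hp
      · have hz : bernoulli i = 0 := by
          rw [bernoulli_eq_bernoulli'_of_ne_one hi1]
          exact bernoulli'_eq_zero_of_odd hoi (by rcases hoi with ⟨k, hk⟩; omega)
        simpa [hz] using PIcvs.zero hp
  -- Faulhaber
  have hF := sum_range_pow p m
  rw [Finset.sum_range_succ] at hF
  have hm1 : ((m:ℚ) + 1) ≠ 0 := by positivity
  have hlast : bernoulli m * ((m+1).choose m : ℚ) * (p:ℚ) ^ (m + 1 - m) / ((m:ℚ) + 1)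
      = (p:ℚ) * bernoulli m := by
    rw [Nat.choose_succ_self_right, show m + 1 - m = 1 by omega]
    push_cast
    field_simp
  rw [hlast] at hF
  set U : ℚ := ∑ i ∈ range m, bernoulli i * ((m+1).choose i : ℚ) * (p:ℚ) ^ (m - i) / ((m:ℚ) + 1)
    with hU
  have hsum : ∑ i ∈ range m, bernoulli i * ((m+1).choose i : ℚ) * (p:ℚ) ^ (m + 1 - i) / ((m:ℚ) + 1)
      = (p:ℚ) * U := by
    rw [hU, Finset.mul_sum]
    refine sum_congr rfl fun i hi => ?_
    rw [mem_range] at hi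
    have : (p:ℚ) ^ (m + 1 - i) = (p:ℚ) * (p:ℚ) ^ (m - i) := by
      rw [← pow_succ']; congr 1; omega
    rw [this]; ring
  rw [hsum] at hF
  -- PIcvs of U
  have hPIU : PIcvs p U := by
    rw [hU]
    refine PIcvs.sum hp ?_
    intro i hi
    rw [mem_range] at hi
    rcases Nat.even_or_odd i with hei | hoi
    · -- i even, m even, i < m ⇒ m + 1 - i ≥ 3
      have h3 : 3 ≤ m + 1 - i := by
        rcases he with ⟨k, hk⟩; rcases hei with ⟨l, hl⟩; omega
      exact term_PI hp hi h3 (hPIb i hi)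
    · rcases eq_or_ne i 1 with rfl | hi1
      · rcases eq_or_ne m 2 with rfl | hm2'
        · have e : bernoulli 1 * (((2:ℕ) + 1).choose 1 : ℚ) * (p:ℚ) ^ (2 - 1) / (((2:ℕ):ℚ) + 1)
              = (p:ℚ) * (-1/2) := by
            rw [bernoulli_one]
            norm_num
            ring
          rw [e]
          exact PIcvs.p_half hp
        · have h3 : 3 ≤ m + 1 - 1 := by omega
          exact term_PI hp hi h3 (hPIb 1 hi)
      · have hz : bernoulli i = 0 := by
          rw [bernoulli_eq_bernoulli'_of_ne_one hi1]
          exact bernoulli'_eq_zero_of_odd hoi (by rcases hoi with ⟨k, hk⟩; omega)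
        simp only [hz, zero_mul, zero_div]
        exact PIcvs.zero hp
  obtain ⟨u, b, hb, hub⟩ := hPIU
  set S : ℤ := ∑ k ∈ range p, (k:ℤ) ^ m with hS
  have hScast : (S:ℚ) = ∑ k ∈ range p, (k:ℚ) ^ m := by rw [hS]; push_cast; rfl
  have hPB : (p:ℚ) * bernoulli m = (S:ℚ) - (p:ℚ) * U := by
    rw [hScast, hF]; ring
  refine ⟨S * b - p * u, b, hb, ?_, ?_⟩
  · push_cast
    rw [hPB]
    linear_combination (-(p:ℚ)) * hub
  · obtain ⟨t, ht⟩ := sum_pow_mod p m hp hm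
    exact ⟨t * b - u, by linear_combination (b:ℤ) * ht⟩



/-- Clausen–von Staudt, denominator form. -/
theorem bernoulli_den_eq_prod (n : ℕ) (hn : 0 < n) (he : Even n) :
    (bernoulli n).den =
      ∏ p ∈ (Finset.range (n + 2)).filter (fun p => p.Prime ∧ (p - 1) ∣ n), p := by
  have bernoulli_key := bernoulli_key
  classical
  set d := (bernoulli n).den with hd
  have hd0 : d ≠ 0 := (bernoulli n).den_nz
  have key : ∀ q : ℕ, q.Prime → (q ∣ d ↔ (q - 1) ∣ n) ∧ ¬ q ^ 2 ∣ d := by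
    intro q hq
    obtain ⟨a, b, hb, heq, hdvd⟩ := bernoulli_key q hq n hn he
    set N := (bernoulli n).num with hN
    have hqz : (q:ℚ) ≠ 0 := Nat.cast_ne_zero.mpr hq.pos.ne'
    have hdeq : ((d:ℤ):ℚ) ≠ 0 := by
      rw [Int.cast_natCast]; exact Nat.cast_ne_zero.mpr hd0
    have hnum : N * ((q:ℤ) * b) = a * (d:ℤ) := by
      have h1 : (((N * ((q:ℤ) * b)) : ℤ) : ℚ) = ((a * (d:ℤ) : ℤ) : ℚ) := by
        push_cast
        rw [← Rat.num_div_den (bernoulli n)] at heq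
        rw [hd] at hdeq
        field_simp at heq
        push_cast at heq ⊢
        linear_combination heq
      exact_mod_cast h1
    have hcop : IsCoprime ((d:ℤ)) N := by
      rw [Int.isCoprime_iff_gcd_eq_one, Int.gcd]
      have hr := (bernoulli n).reduced
      rw [Nat.Coprime, Nat.gcd_comm] at hr
      simpa [hd] using hr
    have hDdvd : (d:ℤ) ∣ (q:ℤ) * b := by
      refine hcop.dvd_of_dvd_mul_left ?_
      exact ⟨a, by linarith [hnum]⟩
    have hqint : Prime (q:ℤ) := Nat.prime_iff_prime_int.mp hq
    constructor
    · constructor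
      · -- q ∣ d → (q-1) ∣ n
        intro hqd
        by_contra hno
        rw [if_neg hno] at hdvd
        simp only [zero_mul, sub_zero] at hdvd
        obtain ⟨a₀, ha₀⟩ := hdvd
        have h2 : N * b = a₀ * (d:ℤ) := by
          have : (q:ℤ) * (N * b) = (q:ℤ) * (a₀ * (d:ℤ)) := by
            rw [ha₀] at hnum; linarith [hnum]
          exact mul_left_cancel₀ (by exact_mod_cast hq.pos.ne') this
        have hDb : (d:ℤ) ∣ b := hcop.dvd_of_dvd_mul_left ⟨a₀, by linarith [h2]⟩
        have : (q:ℤ) ∣ b := dvd_trans (Int.natCast_dvd_natCast.mpr hqd) hDb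
        exact hb this
      · -- (q-1) ∣ n → q ∣ d
        intro hyes
        rw [if_pos hyes] at hdvd
        by_contra hqd
        have hqD : ¬ (q:ℤ) ∣ (d:ℤ) := fun h => hqd (Int.natCast_dvd_natCast.mp h)
        have hqa : (q:ℤ) ∣ a := by
          have h3 : (q:ℤ) ∣ a * (d:ℤ) := ⟨N * b, by linarith [hnum]⟩
          rcases hqint.dvd_mul.mp h3 with h | h
          · exact h
          · exact absurd h hqD
        have hqb : (q:ℤ) ∣ b := by
          have hab : (q:ℤ) ∣ a + b := by
            have := hdvd
            simpa [sub_neg_eq_add, neg_one_mul, sub_eq_add_neg] using this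
          exact (dvd_add_right hqa).mp hab
        exact hb hqb
    · -- ¬ q^2 ∣ d
      intro hsq
      have h1 : ((q:ℤ))^2 ∣ (d:ℤ) := by exact_mod_cast Int.natCast_dvd_natCast.mpr hsq
      have h2 : (q:ℤ)^2 ∣ (q:ℤ) * b := dvd_trans h1 hDdvd
      have h3 : (q:ℤ) ∣ b := by
        obtain ⟨c, hc⟩ := h2
        refine ⟨c, ?_⟩
        have : (q:ℤ) * b = (q:ℤ) * ((q:ℤ) * c) := by rw [hc]; ring
        exact mul_left_cancel₀ (by exact_mod_cast hq.pos.ne') this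
      exact hb h3
  -- factorization argument
  set F := (Finset.range (n + 2)).filter (fun p => p.Prime ∧ (p - 1) ∣ n) with hF
  have hFprime : ∀ q ∈ F, q.Prime := fun q hqF => (mem_filter.mp hqF).2.1
  have hN0 : (∏ p ∈ F, p) ≠ 0 :=
    Finset.prod_ne_zero_iff.mpr fun q hqF => (hFprime q hqF).pos.ne'
  refine Nat.eq_of_factorization_eq hd0 hN0 fun q => ?_
  by_cases hq : q.Prime
  · have hmem : q ∈ F ↔ (q - 1) ∣ n := by
      rw [hF, mem_filter, mem_range]
      constructor
      · rintro ⟨-, -, h⟩; exact h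
      · intro h
        have : q - 1 ≤ n := Nat.le_of_dvd hn h
        exact ⟨by omega, hq, h⟩
    have hFfact : (∏ p ∈ F, p).factorization q = if (q - 1) ∣ n then 1 else 0 := by
      rw [Nat.factorization_prod fun q hqF => (hFprime q hqF).pos.ne']
      rw [Finset.sum_apply']
      have : ∀ r ∈ F, (Nat.factorization r) q = if r = q then 1 else 0 := by
        intro r hrF
        rw [(hFprime r hrF).factorization, Finsupp.single_apply]
      rw [Finset.sum_congr rfl this, Finset.sum_ite_eq' F q (fun _ => 1)]
      simp [hmem]
    have hdfact : d.factorization q = if (q - 1) ∣ n then 1 else 0 := by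
      obtain ⟨hiff, hsq⟩ := key q hq
      have h1 : q ∣ d ↔ 1 ≤ d.factorization q := by
        rw [← Nat.Prime.pow_dvd_iff_le_factorization hq hd0, pow_one]
      have h2 : ¬ 2 ≤ d.factorization q := fun h =>
        hsq ((Nat.Prime.pow_dvd_iff_le_factorization hq hd0).mpr h)
      by_cases hdv : (q - 1) ∣ n
      · rw [if_pos hdv]
        have := h1.mp (hiff.mpr hdv)
        omega
      · rw [if_neg hdv]
        have : ¬ q ∣ d := fun h => hdv (hiff.mp h)
        rw [h1] at this
        omega
    rw [hdfact, hFfact]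
  · rw [Nat.factorization_eq_zero_of_not_prime _ hq,
      Nat.factorization_eq_zero_of_not_prime _ hq]

end CvS
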